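/- Let 𝔾 ⊂ M^{2×2} satisfy det(I+ξ) > 0 and tr(I+ξ) > 0 for all ξ ∈ 𝔾 (the latter following from tr(cof(I+ξ)^T I) > 0), and suppose t𝔾 ⊂ 𝔾 for t ∈ (0,1). Let h : (0,∞) → [0,∞] be convex, nonincreasing with h(λx) ≤ λ^{−r}h(x) for λ ∈ (0,1) and some r ≤ 1, and set g(ξ) = h(det(I+ξ)) on 𝔾, ∞ elsewhere. Then for every ξ ∈ 𝔾 and t ∈ (0,1), g(tξ) − g(ξ) ≤ ((1 − t^{2r})/t^{2r})(1 + g(ξ)); hence g is ru-usc with a ≡ 1. -/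

import Mathlib

open Matrix ENNReal Filter
open scoped Classical

private lemma det_polar (t : ℝ) (ξ : Matrix (Fin 2) (Fin 2) ℝ) :
    (1 + t • ξ).det = t^2 * (1 + ξ).det + (1-t)^2 + t*(1-t) * Matrix.trace (1 + ξ) := by
  simp [Matrix.det_fin_two, Matrix.trace_fin_two, Matrix.one_apply, Matrix.add_apply,
    Matrix.smul_apply, smul_eq_mul]
  ring

theorem g_ru_usc (𝔾 : Set (Matrix (Fin 2) (Fin 2) ℝ))
    (hdet : ∀ ξ ∈ 𝔾, 0 < (1 + ξ).det)
    (htr : ∀ ξ ∈ 𝔾, 0 < Matrix.trace (1 + ξ))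
    (hstar : ∀ t ∈ Set.Ioo (0:ℝ) 1, ∀ ξ ∈ 𝔾, t • ξ ∈ 𝔾)
    (h : ℝ → ℝ≥0∞)
    (hconvex : ∀ x y : ℝ, 0 < x → 0 < y → ∀ l ∈ Set.Icc (0:ℝ) 1,
      h (l * x + (1 - l) * y) ≤ ENNReal.ofReal l * h x + ENNReal.ofReal (1 - l) * h y)
    (hmono : ∀ x y : ℝ, 0 < x → x ≤ y → h y ≤ h x)
    (r : ℝ) (hr : r ≤ 1)
    (hscale : ∀ l ∈ Set.Ioo (0:ℝ) 1, ∀ x : ℝ, 0 < x →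
      h (l * x) ≤ ENNReal.ofReal (l ^ (-r)) * h x)
    (g : Matrix (Fin 2) (Fin 2) ℝ → ℝ≥0∞)
    (hg : ∀ ξ, g ξ = if ξ ∈ 𝔾 then h ((1 + ξ).det) else ⊤) :
    (∀ ξ ∈ 𝔾, ∀ t ∈ Set.Ioo (0:ℝ) 1,
        g (t • ξ) - g ξ
          ≤ ENNReal.ofReal ((1 - t ^ (2 * r)) / t ^ (2 * r)) * (1 + g ξ)) ∧
      limsup (fun t : ℝ => ⨆ ξ ∈ {ξ : Matrix (Fin 2) (Fin 2) ℝ | g ξ < ⊤},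
          ((g (t • ξ) : EReal) - (g ξ : EReal)) / ((1 : EReal) + (g ξ : EReal)))
        (nhdsWithin 1 (Set.Iio 1)) ≤ (0 : EReal) := by
  -- core multiplicative bound
  have key : ∀ ξ ∈ 𝔾, ∀ t ∈ Set.Ioo (0:ℝ) 1,
      g (t • ξ) ≤ ENNReal.ofReal ((t ^ (2*r))⁻¹) * g ξ := by
    intro ξ hξ t ht
    obtain ⟨ht0, ht1⟩ := ht
    have hmem : t • ξ ∈ 𝔾 := hstar t ⟨ht0, ht1⟩ ξ hξ
    have hd := hdet ξ hξ
    have htrp := htr ξ hξ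
    have ht2 : (0:ℝ) < t^2 := by positivity
    have hle : t^2 * (1+ξ).det ≤ (1 + t • ξ).det := by
      rw [det_polar]
      nlinarith [sq_nonneg (1-t), mul_pos (mul_pos ht0 (by linarith : (0:ℝ) < 1-t)) htrp]
    have h1 : h ((1 + t • ξ).det) ≤ h (t^2 * (1+ξ).det) :=
      hmono _ _ (by positivity) hle
    have h2 : h (t^2 * (1+ξ).det) ≤ ENNReal.ofReal ((t^2) ^ (-r)) * h ((1+ξ).det) :=
      hscale (t^2) ⟨ht2, by nlinarith⟩ _ hd
    have hrw : ((t^2 : ℝ)) ^ (-r) = (t ^ (2*r))⁻¹ := by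
      rw [← Real.rpow_natCast t 2, ← Real.rpow_mul ht0.le, ← Real.rpow_neg ht0.le]
      norm_num
    calc g (t • ξ) = h ((1 + t • ξ).det) := by rw [hg]; simp [hmem]
    _ ≤ h (t^2 * (1+ξ).det) := h1
    _ ≤ ENNReal.ofReal ((t ^ (2*r))⁻¹) * h ((1+ξ).det) := by rw [← hrw]; exact h2
    _ = ENNReal.ofReal ((t ^ (2*r))⁻¹) * g ξ := by rw [hg]; simp [hξ]
  have part1 : ∀ ξ ∈ 𝔾, ∀ t ∈ Set.Ioo (0:ℝ) 1,
      g (t • ξ) - g ξ ≤ ENNReal.ofReal ((1 - t ^ (2*r)) / t ^ (2*r)) * (1 + g ξ) := by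
    intro ξ hξ t ht
    have hs0 : 0 < t ^ (2*r) := Real.rpow_pos_of_pos ht.1 _
    set s := t ^ (2*r) with hs
    have hcoe : ENNReal.ofReal s⁻¹ ≤ 1 + ENNReal.ofReal ((1-s)/s) := by
      rcases le_or_gt s 1 with hle | hlt
      · have he : s⁻¹ = 1 + (1-s)/s := by field_simp; ring
        rw [he, ENNReal.ofReal_add (by norm_num) (div_nonneg (by linarith) hs0.le)]
        simp
      · have : ENNReal.ofReal s⁻¹ ≤ 1 := by
          rw [← ENNReal.ofReal_one]
          exact ENNReal.ofReal_le_ofReal (inv_le_one_of_one_le₀ hlt.le)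
        exact this.trans le_self_add
    rw [tsub_le_iff_right]
    calc g (t • ξ) ≤ ENNReal.ofReal s⁻¹ * g ξ := key ξ hξ t ht
    _ ≤ (1 + ENNReal.ofReal ((1-s)/s)) * g ξ := by gcongr
    _ = g ξ + ENNReal.ofReal ((1-s)/s) * g ξ := by ring
    _ ≤ g ξ + ENNReal.ofReal ((1-s)/s) * (1 + g ξ) := by gcongr; exact le_add_self
    _ = ENNReal.ofReal ((1-s)/s) * (1 + g ξ) + g ξ := add_comm _ _
  refine ⟨part1, ?_⟩
  set F : ℝ → EReal := fun t => ((ENNReal.ofReal ((1 - t ^ (2*r)) / t ^ (2*r)) : ℝ≥0∞) : EReal)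
    with hF
  have hFt : Tendsto F (nhdsWithin 1 (Set.Iio 1)) (nhds (0 : EReal)) := by
    have hc : ContinuousAt (fun t : ℝ => (1 - t ^ (2*r)) / t ^ (2*r)) 1 := by
      have hp : ContinuousAt (fun t : ℝ => t ^ (2*r)) 1 :=
        Real.continuousAt_rpow_const 1 (2*r) (Or.inl one_ne_zero)
      exact ((continuousAt_const.sub hp).div hp (by simp [Real.one_rpow]))
    have hv : (fun t : ℝ => (1 - t ^ (2*r)) / t ^ (2*r)) 1 = 0 := by
      simp [Real.one_rpow]
    have h1 : Tendsto (fun t : ℝ => (1 - t ^ (2*r)) / t ^ (2*r))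
        (nhdsWithin 1 (Set.Iio 1)) (nhds 0) := by
      rw [← hv]
      exact (hc.continuousWithinAt).tendsto
    have h2 : Tendsto (fun t : ℝ => ENNReal.ofReal ((1 - t ^ (2*r)) / t ^ (2*r)))
        (nhdsWithin 1 (Set.Iio 1)) (nhds 0) := by
      have := (ENNReal.continuous_ofReal.continuousAt (x := (0:ℝ))).tendsto.comp h1
      simpa [Function.comp_def] using this
    have := (continuous_coe_ennreal_ereal.continuousAt (x := (0:ℝ≥0∞))).tendsto.comp h2
    simpa [hF, Function.comp_def] using this
  have hever : ∀ᶠ t in nhdsWithin 1 (Set.Iio 1),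
      (⨆ ξ ∈ {ξ : Matrix (Fin 2) (Fin 2) ℝ | g ξ < ⊤},
        ((g (t • ξ) : EReal) - (g ξ : EReal)) / ((1 : EReal) + (g ξ : EReal))) ≤ F t := by
    filter_upwards [Ioo_mem_nhdsLT_of_mem (⟨zero_lt_one, le_refl (1:ℝ)⟩ : (1:ℝ) ∈ Set.Ioc 0 1)]
      with t ht
    apply iSup₂_le
    intro ξ hξS
    have hξtop : g ξ ≠ ⊤ := ne_of_lt hξS
    have hξG : ξ ∈ 𝔾 := by
      by_contra hc
      rw [hg ξ, if_neg hc] at hξS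
      exact (lt_irrefl _ hξS)
    set c : ℝ≥0∞ := ENNReal.ofReal ((1 - t ^ (2*r)) / t ^ (2*r)) with hcdef
    have hbd : g (t • ξ) ≤ c * (1 + g ξ) + g ξ := by
      have := part1 ξ hξG t ht
      rwa [tsub_le_iff_right] at this
    -- move to EReal
    have hbdE : (g (t • ξ) : EReal) ≤ (c : EReal) * ((1 : EReal) + (g ξ : EReal)) + (g ξ : EReal) := by
      have := EReal.coe_ennreal_le_coe_ennreal_iff.2 hbd
      rwa [EReal.coe_ennreal_add, EReal.coe_ennreal_mul, EReal.coe_ennreal_add,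
        EReal.coe_ennreal_one] at this
    have hfin : ((1 : EReal) + (g ξ : EReal)) ≠ ⊤ := by
      intro hcontra
      rw [← EReal.coe_ennreal_one, ← EReal.coe_ennreal_add,
        EReal.coe_ennreal_eq_top_iff, ENNReal.add_eq_top] at hcontra
      rcases hcontra with h' | h'
      · exact ENNReal.one_ne_top h'
      · exact hξtop h'
    have hpos : (0 : EReal) < (1 : EReal) + (g ξ : EReal) := by
      rw [← EReal.coe_ennreal_one, ← EReal.coe_ennreal_add, EReal.coe_ennreal_pos]
      exact lt_of_lt_of_le zero_lt_one le_self_add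
    have hsub : (g (t • ξ) : EReal) - (g ξ : EReal) ≤ (c : EReal) * ((1:EReal) + (g ξ : EReal)) := by
      rw [EReal.sub_le_iff_le_add (Or.inl (by simp)) (Or.inl (by simp [EReal.coe_ennreal_eq_top_iff, hξtop]))]
      exact hbdE
    rw [EReal.div_le_iff_le_mul hpos hfin]
    rw [mul_comm] at hsub
    exact hsub
  refine le_trans (limsup_le_limsup hever) ?_
  rw [hFt.limsup_eq]
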